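/- Let F_n (n ∈ ℕ) and F be linear functionals on the real vector space of dynamic functions on I, each 𝒯-sequentially continuous, with F_n(ψ) → F(ψ) for every dynamic test function ψ. Let g_n (n ∈ ℕ) and g be dynamic functions on I, each bounded on I × J with one-sided uniform limits existing at every point of I, with sup_{t ∈ I, s ∈ J} |g_n(t)(s) − g(t)(s)| → 0. Then for every dynamic test function φ, F_n(g_nφ) → F(gφ) as n → ∞, where products are pointwise: (gφ)(t)(s) = g(t)(s)·φ(t)(s). (In the notation of the paper: if f_n → f in 𝒯′ and g_n → g in dG, then g_nf_n → gf in 𝒯′.) -/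

import Mathlib

open Set Filter Topology MeasureTheory

noncomputable section

/-- `J = [-1/2, 1/2]`. -/
def Jset : Set ℝ := Set.Icc (-(1:ℝ)/2) (1/2)

/-- A dynamic function `f` on `I = (a,b)` tends to `c` from the right at `τ`
(uniformly in `s ∈ J`). -/
def RightLim (a b : ℝ) (f : ℝ → ℝ → ℝ) (τ c : ℝ) : Prop :=
  ∀ ε > 0, ∃ η > 0, ∀ t ∈ Set.Ioo a b, t ∈ Set.Ioo τ (τ + η) → ∀ s ∈ Jset, |f t s - c| < ε

/-- A dynamic function `f` on `I = (a,b)` tends to `c` from the left at `τ`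
(uniformly in `s ∈ J`). -/
def LeftLim (a b : ℝ) (f : ℝ → ℝ → ℝ) (τ c : ℝ) : Prop :=
  ∀ ε > 0, ∃ η > 0, ∀ t ∈ Set.Ioo a b, t ∈ Set.Ioo (τ - η) τ → ∀ s ∈ Jset, |f t s - c| < ε

/-- `f` is bounded on `I × J`. -/
def BddOn (a b : ℝ) (f : ℝ → ℝ → ℝ) : Prop :=
  ∃ M, ∀ t ∈ Set.Ioo a b, ∀ s ∈ Jset, |f t s| ≤ M

/-- The one-sided uniform limits of `f` exist at every point of `I = (a,b)`. -/
def HasSidedLimits (a b : ℝ) (f : ℝ → ℝ → ℝ) : Prop :=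
  ∀ τ ∈ Set.Ioo a b, (∃ c, RightLim a b f τ c) ∧ (∃ c, LeftLim a b f τ c)

/-- The support of the dynamic function `f` is contained in the compact
interval `[c,d] ⊂ (a,b)`. -/
def SuppIn (a b : ℝ) (f : ℝ → ℝ → ℝ) (c d : ℝ) : Prop :=
  a < c ∧ c ≤ d ∧ d < b ∧ ∀ t ∉ Set.Icc c d, ∀ s ∈ Jset, f t s = 0

/-- `φ` is a dynamic test function on `I = (a,b)`. -/
def IsDynTest (a b : ℝ) (φ : ℝ → ℝ → ℝ) : Prop :=
  BddOn a b φ ∧ HasSidedLimits a b φ ∧ ∃ c d, SuppIn a b φ c d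

/-- Convergence of a sequence of dynamic test functions in the space `𝒯`:
common compact support in `I` and uniform convergence on `I × J`. -/
def TendstoT (a b : ℝ) (φn : ℕ → ℝ → ℝ → ℝ) (φ : ℝ → ℝ → ℝ) : Prop :=
  (∃ c d, a < c ∧ c ≤ d ∧ d < b ∧ ∀ n, ∀ t ∉ Set.Icc c d, ∀ s ∈ Jset, φn n t s = 0) ∧
  ∀ ε > 0, ∃ N, ∀ n ≥ N, ∀ t ∈ Set.Ioo a b, ∀ s ∈ Jset, |φn n t s - φ t s| < ε

/-- A functional on dynamic functions is `𝒯`-sequentially continuous. -/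
def SeqContT (a b : ℝ) (F : (ℝ → ℝ → ℝ) → ℝ) : Prop :=
  ∀ (φn : ℕ → ℝ → ℝ → ℝ) (φ : ℝ → ℝ → ℝ),
    (∀ n, IsDynTest a b (φn n)) → IsDynTest a b φ → TendstoT a b φn φ →
      Filter.Tendsto (fun n => F (φn n)) Filter.atTop (nhds (F φ))

/-! ### Auxiliary development for stmt_10 -/

lemma zero_mem_Jset : (0:ℝ) ∈ Jset := by constructor <;> norm_num

lemma rightLim_congr' {a b : ℝ} {f f' : ℝ → ℝ → ℝ}
    (h : ∀ t ∈ Set.Ioo a b, ∀ s ∈ Jset, f t s = f' t s) {τ c : ℝ}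
    (hf : RightLim a b f τ c) : RightLim a b f' τ c := by
  intro ε hε
  obtain ⟨η, hη, H⟩ := hf ε hε
  exact ⟨η, hη, fun t ht ht' s hs => (h t ht s hs) ▸ H t ht ht' s hs⟩

lemma leftLim_congr' {a b : ℝ} {f f' : ℝ → ℝ → ℝ}
    (h : ∀ t ∈ Set.Ioo a b, ∀ s ∈ Jset, f t s = f' t s) {τ c : ℝ}
    (hf : LeftLim a b f τ c) : LeftLim a b f' τ c := by
  intro ε hε
  obtain ⟨η, hη, H⟩ := hf ε hε
  exact ⟨η, hη, fun t ht ht' s hs => (h t ht s hs) ▸ H t ht ht' s hs⟩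

lemma hasSidedLimits_congr' {a b : ℝ} {f f' : ℝ → ℝ → ℝ}
    (h : ∀ t ∈ Set.Ioo a b, ∀ s ∈ Jset, f t s = f' t s)
    (hf : HasSidedLimits a b f) : HasSidedLimits a b f' := by
  intro τ hτ
  obtain ⟨⟨c₁, h₁⟩, ⟨c₂, h₂⟩⟩ := hf τ hτ
  exact ⟨⟨c₁, rightLim_congr' h h₁⟩, ⟨c₂, leftLim_congr' h h₂⟩⟩

lemma rightLim_add' {a b : ℝ} {f f' : ℝ → ℝ → ℝ} {τ c c' : ℝ}
    (hf : RightLim a b f τ c) (hf' : RightLim a b f' τ c') :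
    RightLim a b (fun t s => f t s + f' t s) τ (c + c') := by
  intro ε hε
  obtain ⟨η₁, hη₁, H₁⟩ := hf (ε/2) (by linarith)
  obtain ⟨η₂, hη₂, H₂⟩ := hf' (ε/2) (by linarith)
  refine ⟨min η₁ η₂, lt_min hη₁ hη₂, fun t ht ht' s hs => ?_⟩
  obtain ⟨htl, htr⟩ := ht'
  have h₁ := H₁ t ht ⟨htl, lt_of_lt_of_le htr (by linarith [min_le_left η₁ η₂])⟩ s hs
  have h₂ := H₂ t ht ⟨htl, lt_of_lt_of_le htr (by linarith [min_le_right η₁ η₂])⟩ s hs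
  obtain ⟨a₁, b₁⟩ := abs_lt.mp h₁
  obtain ⟨a₂, b₂⟩ := abs_lt.mp h₂
  show |f t s + f' t s - (c + c')| < ε
  exact abs_lt.mpr ⟨by linarith, by linarith⟩

lemma leftLim_add' {a b : ℝ} {f f' : ℝ → ℝ → ℝ} {τ c c' : ℝ}
    (hf : LeftLim a b f τ c) (hf' : LeftLim a b f' τ c') :
    LeftLim a b (fun t s => f t s + f' t s) τ (c + c') := by
  intro ε hε
  obtain ⟨η₁, hη₁, H₁⟩ := hf (ε/2) (by linarith)
  obtain ⟨η₂, hη₂, H₂⟩ := hf' (ε/2) (by linarith)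
  refine ⟨min η₁ η₂, lt_min hη₁ hη₂, fun t ht ht' s hs => ?_⟩
  obtain ⟨htl, htr⟩ := ht'
  have h₁ := H₁ t ht ⟨by linarith [min_le_left η₁ η₂], htr⟩ s hs
  have h₂ := H₂ t ht ⟨by linarith [min_le_right η₁ η₂], htr⟩ s hs
  obtain ⟨a₁, b₁⟩ := abs_lt.mp h₁
  obtain ⟨a₂, b₂⟩ := abs_lt.mp h₂
  show |f t s + f' t s - (c + c')| < ε
  exact abs_lt.mpr ⟨by linarith, by linarith⟩

lemma rightLim_smul' {a b : ℝ} {f : ℝ → ℝ → ℝ} {τ c : ℝ} (r : ℝ)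
    (hf : RightLim a b f τ c) :
    RightLim a b (fun t s => r * f t s) τ (r * c) := by
  intro ε hε
  obtain ⟨η, hη, H⟩ := hf (ε / (|r| + 1)) (by positivity)
  refine ⟨η, hη, fun t ht ht' s hs => ?_⟩
  have h := H t ht ht' s hs
  have habs : |r * f t s - r * c| = |r| * |f t s - c| := by
    rw [← abs_mul]; ring_nf
  rw [habs]
  have hr : (0:ℝ) ≤ |r| := abs_nonneg r
  have hδ : (0:ℝ) < ε / (|r| + 1) := by positivity
  have h2 : |r| * |f t s - c| ≤ |r| * (ε / (|r| + 1)) := mul_le_mul_of_nonneg_left h.le hr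
  have h3 : (|r| + 1) * (ε / (|r| + 1)) = ε := by field_simp
  nlinarith

lemma leftLim_smul' {a b : ℝ} {f : ℝ → ℝ → ℝ} {τ c : ℝ} (r : ℝ)
    (hf : LeftLim a b f τ c) :
    LeftLim a b (fun t s => r * f t s) τ (r * c) := by
  intro ε hε
  obtain ⟨η, hη, H⟩ := hf (ε / (|r| + 1)) (by positivity)
  refine ⟨η, hη, fun t ht ht' s hs => ?_⟩
  have h := H t ht ht' s hs
  have habs : |r * f t s - r * c| = |r| * |f t s - c| := by
    rw [← abs_mul]; ring_nf
  rw [habs]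
  have hr : (0:ℝ) ≤ |r| := abs_nonneg r
  have hδ : (0:ℝ) < ε / (|r| + 1) := by positivity
  have h2 : |r| * |f t s - c| ≤ |r| * (ε / (|r| + 1)) := mul_le_mul_of_nonneg_left h.le hr
  have h3 : (|r| + 1) * (ε / (|r| + 1)) = ε := by field_simp
  nlinarith

lemma rightLim_mul' {a b : ℝ} {f f' : ℝ → ℝ → ℝ} {τ c c' M : ℝ}
    (hM : ∀ t ∈ Set.Ioo a b, ∀ s ∈ Jset, |f t s| ≤ M)
    (h : RightLim a b f τ c) (h' : RightLim a b f' τ c') :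
    RightLim a b (fun t s => f t s * f' t s) τ (c * c') := by
  intro ε hε
  set K := max M 0 with hK
  have hK0 : (0:ℝ) ≤ K := le_max_right _ _
  set δ := ε / (K + |c'| + 1) with hδdef
  have hδ : (0:ℝ) < δ := by
    apply div_pos hε; positivity
  obtain ⟨η₁, hη₁, H₁⟩ := h δ hδ
  obtain ⟨η₂, hη₂, H₂⟩ := h' δ hδ
  refine ⟨min η₁ η₂, lt_min hη₁ hη₂, fun t ht ht' s hs => ?_⟩
  obtain ⟨htl, htr⟩ := ht'
  have e₁ := H₁ t ht ⟨htl, lt_of_lt_of_le htr (by linarith [min_le_left η₁ η₂])⟩ s hs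
  have e₂ := H₂ t ht ⟨htl, lt_of_lt_of_le htr (by linarith [min_le_right η₁ η₂])⟩ s hs
  have hfK : |f t s| ≤ K := le_trans (hM t ht s hs) (le_max_left _ _)
  have key : f t s * f' t s - c * c' = f t s * (f' t s - c') + c' * (f t s - c) := by ring
  have step : |f t s * f' t s - c * c'| ≤ K * δ + |c'| * δ := by
    rw [key]
    calc |f t s * (f' t s - c') + c' * (f t s - c)|
        ≤ |f t s * (f' t s - c')| + |c' * (f t s - c)| := abs_add_le _ _
      _ = |f t s| * |f' t s - c'| + |c'| * |f t s - c| := by rw [abs_mul, abs_mul]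
      _ ≤ K * δ + |c'| * δ := by
          exact add_le_add (mul_le_mul hfK e₂.le (abs_nonneg _) hK0)
            (mul_le_mul_of_nonneg_left e₁.le (abs_nonneg _))
  have h3 : (K + |c'| + 1) * δ = ε := by
    have hne : K + |c'| + 1 ≠ 0 := by linarith [abs_nonneg c']
    rw [hδdef]; field_simp
  nlinarith [abs_nonneg c']

lemma leftLim_mul' {a b : ℝ} {f f' : ℝ → ℝ → ℝ} {τ c c' M : ℝ}
    (hM : ∀ t ∈ Set.Ioo a b, ∀ s ∈ Jset, |f t s| ≤ M)
    (h : LeftLim a b f τ c) (h' : LeftLim a b f' τ c') :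
    LeftLim a b (fun t s => f t s * f' t s) τ (c * c') := by
  intro ε hε
  set K := max M 0 with hK
  have hK0 : (0:ℝ) ≤ K := le_max_right _ _
  set δ := ε / (K + |c'| + 1) with hδdef
  have hδ : (0:ℝ) < δ := by
    apply div_pos hε; positivity
  obtain ⟨η₁, hη₁, H₁⟩ := h δ hδ
  obtain ⟨η₂, hη₂, H₂⟩ := h' δ hδ
  refine ⟨min η₁ η₂, lt_min hη₁ hη₂, fun t ht ht' s hs => ?_⟩
  obtain ⟨htl, htr⟩ := ht'
  have e₁ := H₁ t ht ⟨by linarith [min_le_left η₁ η₂], htr⟩ s hs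
  have e₂ := H₂ t ht ⟨by linarith [min_le_right η₁ η₂], htr⟩ s hs
  have hfK : |f t s| ≤ K := le_trans (hM t ht s hs) (le_max_left _ _)
  have key : f t s * f' t s - c * c' = f t s * (f' t s - c') + c' * (f t s - c) := by ring
  have step : |f t s * f' t s - c * c'| ≤ K * δ + |c'| * δ := by
    rw [key]
    calc |f t s * (f' t s - c') + c' * (f t s - c)|
        ≤ |f t s * (f' t s - c')| + |c' * (f t s - c)| := abs_add_le _ _
      _ = |f t s| * |f' t s - c'| + |c'| * |f t s - c| := by rw [abs_mul, abs_mul]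
      _ ≤ K * δ + |c'| * δ := by
          exact add_le_add (mul_le_mul hfK e₂.le (abs_nonneg _) hK0)
            (mul_le_mul_of_nonneg_left e₁.le (abs_nonneg _))
  have h3 : (K + |c'| + 1) * δ = ε := by
    have hne : K + |c'| + 1 ≠ 0 := by linarith [abs_nonneg c']
    rw [hδdef]; field_simp
  nlinarith [abs_nonneg c']

lemma hasSidedLimits_add' {a b : ℝ} {f f' : ℝ → ℝ → ℝ}
    (h : HasSidedLimits a b f) (h' : HasSidedLimits a b f') :
    HasSidedLimits a b (fun t s => f t s + f' t s) := by
  intro τ hτ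
  obtain ⟨⟨c₁, r₁⟩, ⟨c₂, l₁⟩⟩ := h τ hτ
  obtain ⟨⟨c₁', r₂⟩, ⟨c₂', l₂⟩⟩ := h' τ hτ
  exact ⟨⟨c₁ + c₁', rightLim_add' r₁ r₂⟩, ⟨c₂ + c₂', leftLim_add' l₁ l₂⟩⟩

lemma hasSidedLimits_smul' {a b : ℝ} {f : ℝ → ℝ → ℝ} (r : ℝ)
    (h : HasSidedLimits a b f) :
    HasSidedLimits a b (fun t s => r * f t s) := by
  intro τ hτ
  obtain ⟨⟨c₁, r₁⟩, ⟨c₂, l₁⟩⟩ := h τ hτ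
  exact ⟨⟨r * c₁, rightLim_smul' r r₁⟩, ⟨r * c₂, leftLim_smul' r l₁⟩⟩

lemma hasSidedLimits_mul' {a b : ℝ} {f f' : ℝ → ℝ → ℝ}
    (hb : BddOn a b f) (h : HasSidedLimits a b f) (h' : HasSidedLimits a b f') :
    HasSidedLimits a b (fun t s => f t s * f' t s) := by
  obtain ⟨M, hM⟩ := hb
  intro τ hτ
  obtain ⟨⟨c₁, r₁⟩, ⟨c₂, l₁⟩⟩ := h τ hτ
  obtain ⟨⟨c₁', r₂⟩, ⟨c₂', l₂⟩⟩ := h' τ hτ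
  exact ⟨⟨c₁ * c₁', rightLim_mul' hM r₁ r₂⟩, ⟨c₂ * c₂', leftLim_mul' hM l₁ l₂⟩⟩

lemma hasSidedLimits_zero' {a b : ℝ} : HasSidedLimits a b (fun _ _ => (0:ℝ)) := by
  intro τ _
  constructor
  · exact ⟨0, fun ε hε => ⟨1, one_pos, fun t _ _ s _ => by simpa using hε⟩⟩
  · exact ⟨0, fun ε hε => ⟨1, one_pos, fun t _ _ s _ => by simpa using hε⟩⟩

lemma exists_right_pt {a b τ : ℝ} (hτ : τ ∈ Set.Ioo a b) {η₁ η₂ : ℝ} (h1 : 0 < η₁) (h2 : 0 < η₂) :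
    ∃ t, t ∈ Set.Ioo a b ∧ t ∈ Set.Ioo τ (τ + η₁) ∧ t ∈ Set.Ioo τ (τ + η₂) := by
  obtain ⟨ha, hb⟩ := hτ
  have hm1 : min η₁ η₂ ≤ η₁ := min_le_left _ _
  have hm2 : min η₁ η₂ ≤ η₂ := min_le_right _ _
  have hm : 0 < min η₁ η₂ := lt_min h1 h2
  refine ⟨min (τ + min η₁ η₂ / 2) ((τ + b)/2), ⟨?_, ?_⟩, ⟨?_, ?_⟩, ⟨?_, ?_⟩⟩
  · exact lt_min (by linarith) (by linarith)
  · exact min_lt_of_right_lt (by linarith)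
  · exact lt_min (by linarith) (by linarith)
  · exact min_lt_of_left_lt (by linarith)
  · exact lt_min (by linarith) (by linarith)
  · exact min_lt_of_left_lt (by linarith)

lemma exists_left_pt {a b τ : ℝ} (hτ : τ ∈ Set.Ioo a b) {η₁ η₂ : ℝ} (h1 : 0 < η₁) (h2 : 0 < η₂) :
    ∃ t, t ∈ Set.Ioo a b ∧ t ∈ Set.Ioo (τ - η₁) τ ∧ t ∈ Set.Ioo (τ - η₂) τ := by
  obtain ⟨ha, hb⟩ := hτ
  have hm1 : min η₁ η₂ ≤ η₁ := min_le_left _ _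
  have hm2 : min η₁ η₂ ≤ η₂ := min_le_right _ _
  have hm : 0 < min η₁ η₂ := lt_min h1 h2
  refine ⟨max (τ - min η₁ η₂ / 2) ((a + τ)/2), ⟨?_, ?_⟩, ⟨?_, ?_⟩, ⟨?_, ?_⟩⟩
  · exact lt_max_of_lt_right (by linarith)
  · exact max_lt (by linarith) (by linarith)
  · exact lt_max_of_lt_left (by linarith)
  · exact max_lt (by linarith) (by linarith)
  · exact lt_max_of_lt_left (by linarith)
  · exact max_lt (by linarith) (by linarith)

lemma hasSidedLimits_of_unif {a b : ℝ} {f : ℕ → ℝ → ℝ → ℝ} {flim : ℝ → ℝ → ℝ}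
    (hf : ∀ k, HasSidedLimits a b (f k))
    (hconv : ∀ ε > 0, ∃ K, ∀ k ≥ K, ∀ t ∈ Set.Ioo a b, ∀ s ∈ Jset, |f k t s - flim t s| ≤ ε) :
    HasSidedLimits a b flim := by
  intro τ hτ
  constructor
  · choose ck hck using fun k => (hf k τ hτ).1
    have hcauchy : CauchySeq ck := by
      rw [Metric.cauchySeq_iff']
      intro ε hε
      obtain ⟨K, hK⟩ := hconv (ε/4) (by linarith)
      refine ⟨K, fun k hk => ?_⟩
      obtain ⟨η₁, hη₁, H₁⟩ := hck k (ε/8) (by linarith)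
      obtain ⟨η₂, hη₂, H₂⟩ := hck K (ε/8) (by linarith)
      obtain ⟨t, htI, ht₁, ht₂⟩ := exists_right_pt hτ hη₁ hη₂
      have e₁ := H₁ t htI ht₁ 0 zero_mem_Jset
      have e₂ := H₂ t htI ht₂ 0 zero_mem_Jset
      have e₃ := hK k hk t htI 0 zero_mem_Jset
      have e₄ := hK K le_rfl t htI 0 zero_mem_Jset
      rw [Real.dist_eq]
      obtain ⟨a₁, b₁⟩ := abs_lt.mp e₁
      obtain ⟨a₂, b₂⟩ := abs_lt.mp e₂
      obtain ⟨a₃, b₃⟩ := abs_le.mp e₃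
      obtain ⟨a₄, b₄⟩ := abs_le.mp e₄
      exact abs_lt.mpr ⟨by linarith, by linarith⟩
    obtain ⟨c, hc⟩ := cauchySeq_tendsto_of_complete hcauchy
    refine ⟨c, fun ε hε => ?_⟩
    obtain ⟨K₁, hK₁⟩ := hconv (ε/4) (by linarith)
    obtain ⟨K₂, hK₂⟩ := Metric.tendsto_atTop.mp hc (ε/4) (by linarith)
    set k := max K₁ K₂ with hkdef
    obtain ⟨η, hη, H⟩ := hck k (ε/4) (by linarith)
    refine ⟨η, hη, fun t htI ht' s hs => ?_⟩
    have e₁ := H t htI ht' s hs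
    have e₂ := hK₁ k (le_max_left _ _) t htI s hs
    have e₃ := hK₂ k (le_max_right _ _)
    rw [Real.dist_eq] at e₃
    obtain ⟨a₁, b₁⟩ := abs_lt.mp e₁
    obtain ⟨a₂, b₂⟩ := abs_le.mp e₂
    obtain ⟨a₃, b₃⟩ := abs_lt.mp e₃
    exact abs_lt.mpr ⟨by linarith, by linarith⟩
  · choose ck hck using fun k => (hf k τ hτ).2
    have hcauchy : CauchySeq ck := by
      rw [Metric.cauchySeq_iff']
      intro ε hε
      obtain ⟨K, hK⟩ := hconv (ε/4) (by linarith)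
      refine ⟨K, fun k hk => ?_⟩
      obtain ⟨η₁, hη₁, H₁⟩ := hck k (ε/8) (by linarith)
      obtain ⟨η₂, hη₂, H₂⟩ := hck K (ε/8) (by linarith)
      obtain ⟨t, htI, ht₁, ht₂⟩ := exists_left_pt hτ hη₁ hη₂
      have e₁ := H₁ t htI ht₁ 0 zero_mem_Jset
      have e₂ := H₂ t htI ht₂ 0 zero_mem_Jset
      have e₃ := hK k hk t htI 0 zero_mem_Jset
      have e₄ := hK K le_rfl t htI 0 zero_mem_Jset
      rw [Real.dist_eq]
      obtain ⟨a₁, b₁⟩ := abs_lt.mp e₁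
      obtain ⟨a₂, b₂⟩ := abs_lt.mp e₂
      obtain ⟨a₃, b₃⟩ := abs_le.mp e₃
      obtain ⟨a₄, b₄⟩ := abs_le.mp e₄
      exact abs_lt.mpr ⟨by linarith, by linarith⟩
    obtain ⟨c, hc⟩ := cauchySeq_tendsto_of_complete hcauchy
    refine ⟨c, fun ε hε => ?_⟩
    obtain ⟨K₁, hK₁⟩ := hconv (ε/4) (by linarith)
    obtain ⟨K₂, hK₂⟩ := Metric.tendsto_atTop.mp hc (ε/4) (by linarith)
    set k := max K₁ K₂ with hkdef
    obtain ⟨η, hη, H⟩ := hck k (ε/4) (by linarith)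
    refine ⟨η, hη, fun t htI ht' s hs => ?_⟩
    have e₁ := H t htI ht' s hs
    have e₂ := hK₁ k (le_max_left _ _) t htI s hs
    have e₃ := hK₂ k (le_max_right _ _)
    rw [Real.dist_eq] at e₃
    obtain ⟨a₁, b₁⟩ := abs_lt.mp e₁
    obtain ⟨a₂, b₂⟩ := abs_le.mp e₂
    obtain ⟨a₃, b₃⟩ := abs_lt.mp e₃
    exact abs_lt.mpr ⟨by linarith, by linarith⟩

open scoped BoundedContinuousFunction

/-- The plane with the discrete topology, as index space for bounded functions. -/
structure DiscP where
  t : ℝ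
  s : ℝ

instance : TopologicalSpace DiscP := ⊥
instance : DiscreteTopology DiscP := ⟨rfl⟩

noncomputable instance : NormedAddCommGroup (DiscP →ᵇ ℝ) := inferInstance
noncomputable instance : NormedSpace ℝ (DiscP →ᵇ ℝ) := inferInstance
instance : CompleteSpace (DiscP →ᵇ ℝ) := inferInstance

open Classical BoundedContinuousFunction in
def rfun (a b : ℝ) (f : ℝ → ℝ → ℝ) : DiscP → ℝ :=
  fun p => if p.t ∈ Set.Ioo a b ∧ p.s ∈ Jset then f p.t p.s else 0

lemma rfun_bound (a b : ℝ) (f : ℝ → ℝ → ℝ) (hf : BddOn a b f) (p : DiscP) :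
    ‖rfun a b f p‖ ≤ max (Classical.choose hf) 0 := by
  rw [Real.norm_eq_abs, rfun]
  split_ifs with h
  · exact le_trans (Classical.choose_spec hf p.t h.1 p.s h.2) (le_max_left _ _)
  · simp

/-- The restriction as a bounded (continuous, for the discrete topology) function. -/
def Rbcf (a b : ℝ) (f : ℝ → ℝ → ℝ) (hf : BddOn a b f) : DiscP →ᵇ ℝ :=
  BoundedContinuousFunction.ofNormedAddCommGroupDiscrete (rfun a b f)
    (max (Classical.choose hf) 0) (rfun_bound a b f hf)

@[simp] lemma Rbcf_apply (a b : ℝ) (f : ℝ → ℝ → ℝ) (hf : BddOn a b f) (p : DiscP) :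
    Rbcf a b f hf p = rfun a b f p := rfl

/-- View a bounded function on `DiscP` as a dynamic function. -/
def sigf (u : DiscP →ᵇ ℝ) : ℝ → ℝ → ℝ := fun t s => u ⟨t, s⟩

/-- The closed subspace of `DiscP →ᵇ ℝ` corresponding to dynamic test functions with
support in `[c,d]`. -/
def SM (a b c d : ℝ) : Submodule ℝ (DiscP →ᵇ ℝ) where
  carrier := {u | (∀ p : DiscP, ¬(p.t ∈ Set.Ioo a b ∧ p.s ∈ Jset) → u p = 0) ∧
    HasSidedLimits a b (sigf u) ∧ ∀ t ∉ Set.Icc c d, ∀ s ∈ Jset, sigf u t s = 0}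
  add_mem' := by
    rintro u v ⟨hu1, hu2, hu3⟩ ⟨hv1, hv2, hv3⟩
    refine ⟨fun p hp => ?_, ?_, fun t ht s hs => ?_⟩
    · simp [hu1 p hp, hv1 p hp]
    · have : HasSidedLimits a b (fun t s => sigf u t s + sigf v t s) :=
        hasSidedLimits_add' hu2 hv2
      exact hasSidedLimits_congr' (fun t _ s _ => by simp [sigf]) this
    · simp only [sigf, BoundedContinuousFunction.coe_add, Pi.add_apply]
      rw [show (u ⟨t, s⟩ : ℝ) = 0 from hu3 t ht s hs,
        show (v ⟨t, s⟩ : ℝ) = 0 from hv3 t ht s hs]; ring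
  zero_mem' := by
    refine ⟨fun p _ => rfl, ?_, fun t _ s _ => rfl⟩
    exact hasSidedLimits_congr' (fun t _ s _ => rfl) (hasSidedLimits_zero' (a := a) (b := b))
  smul_mem' := by
    rintro r u ⟨hu1, hu2, hu3⟩
    refine ⟨fun p hp => ?_, ?_, fun t ht s hs => ?_⟩
    · simp [hu1 p hp]
    · have : HasSidedLimits a b (fun t s => r * sigf u t s) := hasSidedLimits_smul' r hu2
      exact hasSidedLimits_congr' (fun t _ s _ => by simp [sigf]) this
    · simp only [sigf, BoundedContinuousFunction.coe_smul, Pi.smul_apply, smul_eq_mul]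
      rw [show (u ⟨t, s⟩ : ℝ) = 0 from hu3 t ht s hs]; ring

lemma SM_isClosed (a b c d : ℝ) : IsClosed ((SM a b c d : Set (DiscP →ᵇ ℝ))) := by
  apply IsSeqClosed.isClosed
  intro uk u hmem hconv
  have hdist : Filter.Tendsto (fun k => dist (uk k) u) Filter.atTop (nhds 0) :=
    tendsto_iff_dist_tendsto_zero.mp hconv
  have hev : ∀ p : DiscP, Filter.Tendsto (fun k => uk k p) Filter.atTop (nhds (u p)) := by
    intro p
    rw [tendsto_iff_dist_tendsto_zero]
    refine squeeze_zero (fun k => dist_nonneg) (fun k => ?_) hdist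
    exact BoundedContinuousFunction.dist_coe_le_dist p
  refine ⟨fun p hp => ?_, ?_, fun t ht s hs => ?_⟩
  · have h0 : (fun k => uk k p) = fun _ => (0:ℝ) := funext fun k => (hmem k).1 p hp
    exact tendsto_nhds_unique (h0 ▸ hev p) tendsto_const_nhds
  · refine hasSidedLimits_of_unif (f := fun k => sigf (uk k)) (fun k => (hmem k).2.1) ?_
    intro ε hε
    obtain ⟨K, hK⟩ := Metric.tendsto_atTop.mp hconv ε hε
    refine ⟨K, fun k hk t _ s _ => ?_⟩
    have := BoundedContinuousFunction.dist_coe_le_dist (f := uk k) (g := u) ⟨t, s⟩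
    rw [Real.dist_eq] at this
    exact le_trans this (hK k hk).le
  · have h0 : (fun k => uk k ⟨t, s⟩) = fun _ => (0:ℝ) :=
      funext fun k => (hmem k).2.2 t ht s hs
    exact tendsto_nhds_unique (h0 ▸ hev ⟨t, s⟩) tendsto_const_nhds


lemma mem_SM_isDynTest {a b c d : ℝ} (hac : a < c) (hcd : c ≤ d) (hdb : d < b)
    {u : DiscP →ᵇ ℝ} (hu : u ∈ SM a b c d) : IsDynTest a b (sigf u) := by
  obtain ⟨hu1, hu2, hu3⟩ := hu
  refine ⟨⟨‖u‖, fun t _ s _ => ?_⟩, hu2, c, d, hac, hcd, hdb, hu3⟩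
  rw [← Real.norm_eq_abs]
  exact u.norm_coe_le_norm ⟨t, s⟩

lemma Rbcf_mem_SM {a b c d : ℝ} {ψ : ℝ → ℝ → ℝ} (hb : BddOn a b ψ)
    (hsl : HasSidedLimits a b ψ) (hsupp : SuppIn a b ψ c d) :
    Rbcf a b ψ hb ∈ SM a b c d := by
  refine ⟨fun p hp => ?_, ?_, fun t ht s hs => ?_⟩
  · simp only [Rbcf_apply, rfun, if_neg hp]
  · refine hasSidedLimits_congr' (f := ψ) (fun t htI s hs => ?_) hsl
    simp only [sigf, Rbcf_apply, rfun]
    rw [if_pos ⟨htI, hs⟩]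
  · simp only [sigf, Rbcf_apply, rfun]
    split_ifs with h
    · exact hsupp.2.2.2 t ht s hs
    · rfl

lemma sigf_Rbcf_eq_on {a b : ℝ} {ψ : ℝ → ℝ → ℝ} (hb : BddOn a b ψ) :
    ∀ t ∈ Set.Ioo a b, ∀ s ∈ Jset, sigf (Rbcf a b ψ hb) t s = ψ t s := by
  intro t htI s hs
  simp only [sigf, Rbcf_apply, rfun]
  rw [if_pos ⟨htI, hs⟩]

/-- Key evaluation lemma: a `𝒯`-sequentially continuous functional takes the same
value on a test function and on its restriction to `I × J` (extended by zero). -/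
lemma key_eval {a b c d : ℝ} (G : (ℝ → ℝ → ℝ) → ℝ) (hG : SeqContT a b G)
    {ψ : ℝ → ℝ → ℝ} (hb : BddOn a b ψ) (hsl : HasSidedLimits a b ψ)
    (hsupp : SuppIn a b ψ c d) :
    G (sigf (Rbcf a b ψ hb)) = G ψ := by
  obtain ⟨hac, hcd, hdb, hs0⟩ := hsupp
  have hmem := Rbcf_mem_SM hb hsl ⟨hac, hcd, hdb, hs0⟩
  have h1 : IsDynTest a b (sigf (Rbcf a b ψ hb)) := mem_SM_isDynTest hac hcd hdb hmem
  have h2 : IsDynTest a b ψ := ⟨hb, hsl, c, d, hac, hcd, hdb, hs0⟩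
  have h3 : TendstoT a b (fun _ => sigf (Rbcf a b ψ hb)) ψ := by
    refine ⟨⟨c, d, hac, hcd, hdb, fun n t ht s hs => hmem.2.2 t ht s hs⟩, fun ε hε => ?_⟩
    refine ⟨0, fun n _ t htI s hs => ?_⟩
    show |sigf (Rbcf a b ψ hb) t s - ψ t s| < ε
    rw [sigf_Rbcf_eq_on hb t htI s hs]
    simpa using hε
  exact tendsto_nhds_unique tendsto_const_nhds (hG _ _ (fun _ => h1) h2 h3)

lemma mul_test {a b c d : ℝ} {g φ : ℝ → ℝ → ℝ}
    (hgb : BddOn a b g) (hgsl : HasSidedLimits a b g)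
    (hφb : BddOn a b φ) (hφsl : HasSidedLimits a b φ) (hφsupp : SuppIn a b φ c d) :
    BddOn a b (fun t s => g t s * φ t s) ∧
      HasSidedLimits a b (fun t s => g t s * φ t s) ∧
      SuppIn a b (fun t s => g t s * φ t s) c d := by
  obtain ⟨Mg, hMg⟩ := hgb
  obtain ⟨Mφ, hMφ⟩ := hφb
  refine ⟨⟨max Mg 0 * max Mφ 0, fun t ht s hs => ?_⟩,
    hasSidedLimits_mul' ⟨Mg, hMg⟩ hgsl hφsl,
    hφsupp.1, hφsupp.2.1, hφsupp.2.2.1, fun t ht s hs => ?_⟩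
  · rw [abs_mul]
    exact mul_le_mul (le_trans (hMg t ht s hs) (le_max_left _ _))
      (le_trans (hMφ t ht s hs) (le_max_left _ _)) (abs_nonneg _) (le_max_right _ _)
  · show g t s * φ t s = 0
    rw [hφsupp.2.2.2 t ht s hs]; ring

set_option maxHeartbeats 1000000 in
/-- continuity of multiplication in `𝒯'`: if `fₙ → f` in `𝒯'` and
`gₙ → g` uniformly on `I × J` (all `gₙ, g` bounded dynamic regulated), then
`gₙfₙ → gf` in `𝒯'`, i.e. `Fₙ(gₙφ) → F(gφ)` for every dynamic test function `φ`. -/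
theorem stmt_10 (a b : ℝ) (F : ℕ → (ℝ → ℝ → ℝ) →ₗ[ℝ] ℝ) (Fl : (ℝ → ℝ → ℝ) →ₗ[ℝ] ℝ)
    (hcontn : ∀ n, SeqContT a b (F n)) (hcontF : SeqContT a b Fl)
    (hFconv : ∀ ψ, IsDynTest a b ψ →
      Filter.Tendsto (fun n => F n ψ) Filter.atTop (nhds (Fl ψ)))
    (gn : ℕ → ℝ → ℝ → ℝ) (g : ℝ → ℝ → ℝ)
    (hgn : ∀ n, BddOn a b (gn n) ∧ HasSidedLimits a b (gn n))
    (hg : BddOn a b g ∧ HasSidedLimits a b g)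
    (hgconv : ∀ ε > 0, ∃ N, ∀ n ≥ N, ∀ t ∈ Set.Ioo a b, ∀ s ∈ Jset, |gn n t s - g t s| < ε)
    (φ : ℝ → ℝ → ℝ) (hφ : IsDynTest a b φ) :
    Filter.Tendsto (fun n => F n (fun t s => gn n t s * φ t s)) Filter.atTop
      (nhds (Fl (fun t s => g t s * φ t s))) := by
  obtain ⟨hφb, hφsl, cc, dd, hφsupp⟩ := hφ
  obtain ⟨hac, hcd, hdb, hφ0⟩ := hφsupp
  -- the products are test functions with support in [cc, dd]
  have hψn : ∀ n, BddOn a b (fun t s => gn n t s * φ t s) ∧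
      HasSidedLimits a b (fun t s => gn n t s * φ t s) ∧
      SuppIn a b (fun t s => gn n t s * φ t s) cc dd :=
    fun n => mul_test (hgn n).1 (hgn n).2 hφb hφsl ⟨hac, hcd, hdb, hφ0⟩
  have hψ : BddOn a b (fun t s => g t s * φ t s) ∧
      HasSidedLimits a b (fun t s => g t s * φ t s) ∧
      SuppIn a b (fun t s => g t s * φ t s) cc dd :=
    mul_test hg.1 hg.2 hφb hφsl ⟨hac, hcd, hdb, hφ0⟩
  -- the subspace and its completeness
  haveI : CompleteSpace ↥(SM a b cc dd) := (SM_isClosed a b cc dd).completeSpace_coe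
  -- the linear map from the subspace to dynamic functions
  have coeadd : ∀ u v : ↥(SM a b cc dd),
      sigf ((u + v : ↥(SM a b cc dd)) : DiscP →ᵇ ℝ) =
        fun t s => sigf (u : DiscP →ᵇ ℝ) t s + sigf (v : DiscP →ᵇ ℝ) t s := by
    intro u v; funext t s; simp [sigf]
  have coesmul : ∀ (r : ℝ) (u : ↥(SM a b cc dd)),
      sigf ((r • u : ↥(SM a b cc dd)) : DiscP →ᵇ ℝ) =
        fun t s => r * sigf (u : DiscP →ᵇ ℝ) t s := by
    intro r u; funext t s; simp [sigf]
  set σS : ↥(SM a b cc dd) →ₗ[ℝ] (ℝ → ℝ → ℝ) :=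
    { toFun := fun u => sigf (u : DiscP →ᵇ ℝ)
      map_add' := fun u v => coeadd u v
      map_smul' := fun r u => coesmul r u } with hσS
  -- continuity of each composed functional
  have hcontL : ∀ n, Continuous ((F n).comp σS) := by
    intro n
    refine SeqContinuous.continuous ?_
    intro xk x hx
    have := hcontn n (fun k => sigf ((xk k : ↥(SM a b cc dd)) : DiscP →ᵇ ℝ))
      (sigf ((x : ↥(SM a b cc dd)) : DiscP →ᵇ ℝ))
      (fun k => mem_SM_isDynTest hac hcd hdb (xk k).2)
      (mem_SM_isDynTest hac hcd hdb x.2) ?_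
    · exact this
    · constructor
      · exact ⟨cc, dd, hac, hcd, hdb, fun k t ht s hs => (xk k).2.2.2 t ht s hs⟩
      · intro ε hε
        obtain ⟨N, hN⟩ := Metric.tendsto_atTop.mp hx ε hε
        refine ⟨N, fun k hk t _ s _ => ?_⟩
        have h1 : dist ((xk k : DiscP →ᵇ ℝ) ⟨t, s⟩) ((x : DiscP →ᵇ ℝ) ⟨t, s⟩) ≤
            dist (xk k : DiscP →ᵇ ℝ) (x : DiscP →ᵇ ℝ) :=
          BoundedContinuousFunction.dist_coe_le_dist _
        have h2 : dist (xk k : DiscP →ᵇ ℝ) (x : DiscP →ᵇ ℝ) = dist (xk k) x := rfl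
        rw [Real.dist_eq] at h1
        exact lt_of_le_of_lt h1 (by rw [h2]; exact hN k hk)
  set Tn : ℕ → ↥(SM a b cc dd) →L[ℝ] ℝ := fun n => ⟨(F n).comp σS, hcontL n⟩ with hTn
  -- pointwise boundedness and Banach–Steinhaus
  have hpt : ∀ x : ↥(SM a b cc dd), ∃ C, ∀ n, ‖Tn n x‖ ≤ C := by
    intro x
    have htest : IsDynTest a b (sigf (x : DiscP →ᵇ ℝ)) :=
      mem_SM_isDynTest hac hcd hdb x.2
    have hconv := (hFconv _ htest).norm
    obtain ⟨C, hC⟩ := hconv.bddAbove_range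
    exact ⟨C, fun n => hC ⟨n, rfl⟩⟩
  obtain ⟨C, hC⟩ := banach_steinhaus (E := ↥(SM a b cc dd)) (F := ℝ) (𝕜 := ℝ) (𝕜₂ := ℝ) (g := Tn) hpt
  -- the elements of the subspace
  set un : ℕ → ↥(SM a b cc dd) := fun n =>
    ⟨Rbcf a b _ (hψn n).1, Rbcf_mem_SM (hψn n).1 (hψn n).2.1 (hψn n).2.2⟩ with hun
  set uI : ↥(SM a b cc dd) := ⟨Rbcf a b _ hψ.1, Rbcf_mem_SM hψ.1 hψ.2.1 hψ.2.2⟩ with huI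
  -- norm convergence un → uI
  obtain ⟨Mφ, hMφ⟩ := hφb
  set M : ℝ := max Mφ 0 with hM
  have hM0 : (0:ℝ) ≤ M := le_max_right _ _
  have hnorm : Filter.Tendsto (fun n => ‖un n - uI‖) Filter.atTop (nhds 0) := by
    rw [Metric.tendsto_atTop]
    intro ε hε
    obtain ⟨N, hN⟩ := hgconv (ε / 2 / (M + 1)) (by positivity)
    refine ⟨N, fun n hn => ?_⟩
    have hbound : ‖un n - uI‖ ≤ ε / 2 := by
      rw [Submodule.coe_norm, Submodule.coe_sub]
      apply BoundedContinuousFunction.norm_le (by positivity) |>.mpr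
      intro p
      rw [BoundedContinuousFunction.coe_sub, Pi.sub_apply]
      simp only [hun, huI, Rbcf_apply, rfun]
      split_ifs with h
      · obtain ⟨htI, hsJ⟩ := h
        have h1 := (hN n hn p.t htI p.s hsJ).le
        have h2 : |φ p.t p.s| ≤ M := le_trans (hMφ p.t htI p.s hsJ) (le_max_left _ _)
        have key : gn n p.t p.s * φ p.t p.s - g p.t p.s * φ p.t p.s =
            (gn n p.t p.s - g p.t p.s) * φ p.t p.s := by ring
        rw [Real.norm_eq_abs, key, abs_mul]
        have : |gn n p.t p.s - g p.t p.s| * |φ p.t p.s| ≤ (ε / 2 / (M + 1)) * M :=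
          mul_le_mul h1 h2 (abs_nonneg _) (by positivity)
        refine le_trans this ?_
        rw [div_mul_eq_mul_div, div_le_iff₀ (by positivity)]
        nlinarith
      · simp
        positivity
    rw [Real.dist_eq, sub_zero, abs_of_nonneg (norm_nonneg _)]
    linarith
  -- identify the functionals' values
  have hidn : ∀ n, Tn n (un n) = F n (fun t s => gn n t s * φ t s) := by
    intro n
    exact key_eval (F n) (hcontn n) (hψn n).1 (hψn n).2.1 (hψn n).2.2
  have hidI : Fl (σS uI) = Fl (fun t s => g t s * φ t s) :=
    key_eval Fl hcontF hψ.1 hψ.2.1 hψ.2.2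
  -- assemble
  have hA : Filter.Tendsto (fun n => Tn n (un n) - Tn n uI) Filter.atTop (nhds 0) := by
    have hbd : ∀ n, ‖Tn n (un n) - Tn n uI‖ ≤ C * ‖un n - uI‖ := by
      intro n
      rw [← map_sub]
      exact (Tn n).le_of_opNorm_le (hC n) _
    have hz : Filter.Tendsto
        (fun n => C * ‖un n - uI‖) Filter.atTop (nhds 0) := by
      have := hnorm.const_mul C
      simpa using this
    exact squeeze_zero_norm hbd hz
  have hB : Filter.Tendsto (fun n => Tn n uI) Filter.atTop (nhds (Fl (σS uI))) :=
    hFconv (σS uI) (mem_SM_isDynTest hac hcd hdb uI.2)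
  have hsum := hA.add hB
  rw [zero_add] at hsum
  have hfinal : Filter.Tendsto (fun n => Tn n (un n)) Filter.atTop (nhds (Fl (σS uI))) := by
    have heq2 : (fun n => (Tn n) (un n) - (Tn n) uI + (Tn n) uI) = fun n => Tn n (un n) := by
      funext n; ring
    rwa [heq2] at hsum
  rw [hidI] at hfinal
  exact hfinal.congr hidn
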